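/- There is an absolute constant $C > 0$ such that the following holds. Let $Y = \{y_1, \ldots, y_m\}$, $m \ge 3$, be an increasing real sequence such that $\Delta^2 y_k > 0$ is weakly-decreasing with constant $K \ge 1$ (i.e., $\Delta^2 y_j \le K \Delta^2 y_n$ whenever $j > n$) and $\Delta y_k > 0$. Then the discrepancy satisfies $D(Y) \le C\left(\frac{y_m - y_1}{m} + \frac{K}{\sqrt{y_m - y_1}}\right)$ (assuming $y_m > y_1$). -/

import Mathlib

open Finset

section Aux
variable {m : ℕ} {y : ℕ → ℝ}

lemma y_mono (hg : ∀ k : ℕ, 1 ≤ k → k + 1 ≤ m → 0 < y (k + 1) - y k) :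
    ∀ i j : ℕ, 1 ≤ i → i ≤ j → j ≤ m → y i ≤ y j := by
  intro i j hi hij hjm
  induction j, hij using Nat.le_induction with
  | base => exact le_rfl
  | succ j hij ih =>
    have h1 : y i ≤ y j := ih (by omega)
    have h2 : 0 < y (j + 1) - y j := hg j (by omega) (by omega)
    linarith

lemma spread_lower (hg : ∀ k : ℕ, 1 ≤ k → k + 1 ≤ m → 0 < y (k + 1) - y k)
    (c : ℝ) : ∀ i j : ℕ, 1 ≤ i → i ≤ j → j ≤ m →
    (∀ k, i ≤ k → k < j → c ≤ y (k + 1) - y k) →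
    ((j : ℝ) - i) * c ≤ y j - y i := by
  intro i j hi hij hjm hck
  induction j, hij using Nat.le_induction with
  | base => simp
  | succ j hij ih =>
    have h1 : ((j : ℝ) - i) * c ≤ y j - y i :=
      ih (by omega) (fun k hk hk' => hck k hk (by omega))
    have h2 : c ≤ y (j + 1) - y j := hck j hij (by omega)
    push_cast
    nlinarith

lemma spread_upper (c : ℝ) : ∀ i j : ℕ, i ≤ j →
    (∀ k, i ≤ k → k < j → y (k + 1) - y k ≤ c) →
    y j - y i ≤ ((j : ℝ) - i) * c := by
  intro i j hij hck
  induction j, hij using Nat.le_induction with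
  | base => simp
  | succ j hij ih =>
    have h1 : y j - y i ≤ ((j : ℝ) - i) * c :=
      ih (fun k hk hk' => hck k hk (by omega))
    have h2 : y (j + 1) - y j ≤ c := hck j hij (by omega)
    push_cast
    nlinarith

lemma gap_mono (hd : ∀ k : ℕ, 1 ≤ k → k + 2 ≤ m → 0 < y (k + 2) - 2 * y (k + 1) + y k) :
    ∀ i j : ℕ, 1 ≤ i → i ≤ j → j + 1 ≤ m → y (i + 1) - y i ≤ y (j + 1) - y j := by
  intro i j hi hij hjm
  induction j, hij using Nat.le_induction with
  | base => exact le_rfl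
  | succ j hij ih =>
    have h1 : y (i + 1) - y i ≤ y (j + 1) - y j := ih (by omega)
    have h2 : 0 < y (j + 2) - 2 * y (j + 1) + y j := hd j (by omega) (by omega)
    have : y (j + 1 + 1) = y (j + 2) := by norm_num
    rw [this]
    linarith

lemma sum_Icc_telescope (f : ℕ → ℝ) (u : ℕ) : ∀ v : ℕ, u ≤ v + 1 →
    ∑ k ∈ Finset.Icc u v, (f (k + 1) - f k) = f (v + 1) - f u := by
  intro v
  induction v with
  | zero =>
    intro h
    interval_cases u
    · simp
    · simp
  | succ v ih =>
    intro h
    by_cases hu : u ≤ v + 1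
    · rw [Finset.sum_Icc_succ_top hu, ih hu]; ring
    · have h2 : u = v + 2 := by omega
      subst h2
      rw [show Finset.Icc (v + 2) (v + 1) = ∅ from Finset.Icc_eq_empty (by omega)]
      simp
end Aux
section Aux2
variable {m : ℕ} {y : ℕ → ℝ}

open scoped Classical in
lemma count_upper (hg : ∀ k : ℕ, 1 ≤ k → k + 1 ≤ m → 0 < y (k + 1) - y k)
    (p q : ℕ) (hp : 1 ≤ p) (hq : q ≤ m) (u v c : ℝ)
    (huv : u ≤ v) (hc : 0 < c)
    (hcg : ∀ k, p ≤ k → k < q → c ≤ y (k + 1) - y k) :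
    (((Finset.Icc p q).filter (fun k => y k ∈ Set.Ico u v)).card : ℝ) ≤ (v - u) / c + 1 := by
  set S := (Finset.Icc p q).filter (fun k => y k ∈ Set.Ico u v) with hS
  have hvc : (0:ℝ) ≤ (v - u) / c := div_nonneg (by linarith) hc.le
  rcases S.eq_empty_or_nonempty with h | h
  · rw [h]; simp only [Finset.card_empty, Nat.cast_zero]; linarith
  · set k₁ := S.min' h with hk1
    set k₂ := S.max' h with hk2
    have hmem1 := Finset.mem_filter.mp (show k₁ ∈ Finset.filter _ _ from S.min'_mem h)
    have hmem2 := Finset.mem_filter.mp (show k₂ ∈ Finset.filter _ _ from S.max'_mem h)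
    have hk1i := Finset.mem_Icc.mp hmem1.1
    have hy1u := hmem1.2.1
    have hy1v := hmem1.2.2
    have hk2i := Finset.mem_Icc.mp hmem2.1
    have hy2u := hmem2.2.1
    have hy2v := hmem2.2.2
    have hk12 : k₁ ≤ k₂ := S.min'_le _ (S.max'_mem h)
    have hsub : S ⊆ Finset.Icc k₁ k₂ := fun x hx =>
      Finset.mem_Icc.mpr ⟨S.min'_le _ hx, S.le_max' _ hx⟩
    have hcard : S.card ≤ k₂ - k₁ + 1 := by
      calc S.card ≤ (Finset.Icc k₁ k₂).card := Finset.card_le_card hsub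
        _ = k₂ - k₁ + 1 := by rw [Nat.card_Icc]; omega
    have hsp : ((k₂ : ℝ) - k₁) * c ≤ y k₂ - y k₁ :=
      spread_lower hg c k₁ k₂ (by omega) hk12 (by omega)
        (fun k hk hk' => hcg k (by omega) (by omega))
    have h2 : ((k₂ : ℝ) - k₁) ≤ (v - u) / c := by
      rw [le_div_iff₀ hc]; nlinarith
    calc (S.card : ℝ) ≤ ((k₂ - k₁ + 1 : ℕ) : ℝ) := by exact_mod_cast hcard
      _ = (k₂ : ℝ) - k₁ + 1 := by push_cast [hk12]; ring
      _ ≤ (v - u) / c + 1 := by linarith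

open scoped Classical in
lemma count_lower (hg : ∀ k : ℕ, 1 ≤ k → k + 1 ≤ m → 0 < y (k + 1) - y k)
    (p q : ℕ) (hp : 1 ≤ p) (hq : q + 1 ≤ m) (hpq : p ≤ q) (u v c : ℝ) (hc : 0 < c)
    (hgap : ∀ k, p ≤ k → k ≤ q → y (k + 1) - y k ≤ c)
    (hu : y p < u) (huv : u ≤ v) (hv : v ≤ y (q + 1)) :
    (v - u) / c - 1 ≤ (((Finset.Icc p q).filter (fun k => y k ∈ Set.Ico u v)).card : ℝ) := by
  set S := (Finset.Icc p q).filter (fun k => y k ∈ Set.Ico u v) with hS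
  set T : ℕ := ⌊(v - u) / c⌋₊ with hT
  have hvu : 0 ≤ (v - u) / c := div_nonneg (by linarith) hc.le
  have hTle : (T : ℝ) ≤ (v - u) / c := Nat.floor_le hvu
  set A : ℕ → Finset ℕ := fun t => (Finset.Icc p (q + 1)).filter (fun k => u + t * c ≤ y k) with hA
  have hAne : ∀ t : ℕ, t < T → (A t).Nonempty := by
    intro t ht
    refine ⟨q + 1, ?_⟩
    rw [hA]
    simp only [Finset.mem_filter, Finset.mem_Icc]
    have h1 : (t : ℝ) * c ≤ (v - u) / c * c := by
      apply mul_le_mul_of_nonneg_right _ hc.le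
      calc (t : ℝ) ≤ T := by exact_mod_cast ht.le
        _ ≤ _ := hTle
    rw [div_mul_cancel₀ _ hc.ne'] at h1
    exact ⟨⟨by omega, le_rfl⟩, by linarith⟩
  classical
  set f : ℕ → ℕ := fun t => if h : (A t).Nonempty then (A t).min' h else 0 with hf
  have key : ∀ t : ℕ, t < T → f t ∈ S ∧ u + t * c ≤ y (f t) ∧ y (f t) < u + (t + 1) * c := by
    intro t ht
    have hne := hAne t ht
    have hft : f t = (A t).min' hne := by rw [hf]; simp [hne]
    have hmem : f t ∈ A t := by rw [hft]; exact (A t).min'_mem hne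
    rw [hA] at hmem
    simp only [Finset.mem_filter, Finset.mem_Icc] at hmem
    obtain ⟨⟨hfp, hfq⟩, hfy⟩ := hmem
    have htc : (0 : ℝ) ≤ (t:ℝ) * c := mul_nonneg (Nat.cast_nonneg t) hc.le
    have ht1c : u + ((t:ℝ) + 1) * c ≤ v := by
      have h1 : ((t : ℝ) + 1) * c ≤ (v - u) / c * c := by
        apply mul_le_mul_of_nonneg_right _ hc.le
        have : ((t : ℝ) + 1) ≤ T := by exact_mod_cast ht
        linarith
      rw [div_mul_cancel₀ _ hc.ne'] at h1
      linarith
    have hfp' : p < f t := by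
      rcases eq_or_lt_of_le hfp with h | h
      · exfalso; rw [← h] at hfy; linarith
      · exact h
    have hprev : y (f t - 1) < u + t * c := by
      by_contra hcon
      push_neg at hcon
      have hmem' : f t - 1 ∈ A t := by
        rw [hA]
        simp only [Finset.mem_filter, Finset.mem_Icc]
        exact ⟨⟨by omega, by omega⟩, hcon⟩
      have h5 : (A t).min' hne ≤ f t - 1 := Finset.min'_le _ _ hmem'
      have h6 : f t ≤ f t - 1 := le_trans (le_of_eq hft) h5
      omega
    have hstep : y (f t) ≤ y (f t - 1) + c := by
      have h1 : y (f t - 1 + 1) - y (f t - 1) ≤ c := hgap (f t - 1) (by omega) (by omega)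
      have h2 : f t - 1 + 1 = f t := by omega
      rw [h2] at h1
      linarith
    have hyub : y (f t) < u + ((t:ℝ) + 1) * c := by nlinarith
    have hfq' : f t ≤ q := by
      by_contra hcon
      have : f t = q + 1 := by omega
      rw [this] at hyub
      linarith
    refine ⟨?_, hfy, by push_cast; exact hyub⟩
    rw [hS]
    simp only [Finset.mem_filter, Finset.mem_Icc, Set.mem_Ico]
    exact ⟨⟨hfp, hfq'⟩, ⟨by linarith, by linarith⟩⟩
  have hinj : ∀ t t' : ℕ, t < T → t' < T → t < t' → f t ≠ f t' := by
    intro t t' ht ht' htt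
    obtain ⟨_, _, h2⟩ := key t ht
    obtain ⟨_, h3, _⟩ := key t' ht'
    intro heq
    rw [heq] at h2
    have : ((t : ℝ) + 1) * c ≤ (t' : ℝ) * c := by
      apply mul_le_mul_of_nonneg_right _ hc.le
      exact_mod_cast htt
    push_cast at h2
    linarith
  have hcard : T ≤ S.card := by
    have := Finset.card_le_card_of_injOn f
      (fun t ht => (key t (Finset.mem_range.mp ht)).1)
      (fun t ht t' ht' heq => by
        simp only [Finset.coe_range, Set.mem_Iio] at ht ht'
        by_contra hne
        rcases lt_or_gt_of_ne hne with h | h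
        · exact hinj t t' ht ht' h heq
        · exact hinj t' t ht' ht h heq.symm)
    simpa using this
  have hTS : (T : ℝ) ≤ S.card := by exact_mod_cast hcard
  linarith [Nat.lt_floor_add_one ((v - u) / c)]
end Aux2
section Main
set_option maxHeartbeats 2000000 in
open scoped Classical in
lemma main_count (m : ℕ) (y : ℕ → ℝ) (hm3 : 3 ≤ m)
    (hg : ∀ k : ℕ, 1 ≤ k → k + 1 ≤ m → 0 < y (k + 1) - y k)
    (hd : ∀ k : ℕ, 1 ≤ k → k + 2 ≤ m → 0 < y (k + 2) - 2 * y (k + 1) + y k)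
    (t₀ : ℕ) (ht1 : 1 ≤ t₀) (ht2 : t₀ + 1 ≤ m) (G : ℝ) (hG : 0 < G)
    (hGt : G ≤ y (t₀ + 1) - y t₀)
    (α β : ℝ) (hα : 0 ≤ α) (hαβ : α < β) (hβ : β ≤ 1) :
    |(((Finset.Icc 1 m).filter (fun k => Int.fract (y k) ∈ Set.Ico α β)).card : ℝ)
      - m * (β - α)| ≤ ((t₀ : ℝ) - 1) + 3 / G + 2 * (y m - y 1) + 6 := by
  have hmono : ∀ i j : ℕ, 1 ≤ i → i ≤ j → j ≤ m → y i ≤ y j := y_mono hg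
  have gmono := gap_mono hd
  have hfmono : ∀ i j : ℕ, 1 ≤ i → i ≤ j → j ≤ m → ⌊y i⌋ ≤ ⌊y j⌋ :=
    fun i j h1 h2 h3 => Int.floor_le_floor (hmono i j h1 h2 h3)
  set ℓ := β - α with hℓ
  have hℓ0 : 0 < ℓ := by simp [hℓ]; linarith
  have hℓ1 : ℓ ≤ 1 := by simp [hℓ]; linarith
  set Pred : ℕ → Prop := fun k => Int.fract (y k) ∈ Set.Ico α β with hPred
  -- the w function
  set w : ℕ → ℝ := fun k => 1 / (y (min k (m - 1) + 1) - y (min k (m - 1))) with hw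
  have hwpos : ∀ k : ℕ, 1 ≤ k → 0 < w k := by
    intro k hk
    have h1 : 1 ≤ min k (m - 1) := by omega
    have h2 : min k (m - 1) + 1 ≤ m := by omega
    exact one_div_pos.mpr (hg _ h1 h2)
  have hwanti : ∀ k k' : ℕ, 1 ≤ k → k ≤ k' → w k' ≤ w k := by
    intro k k' hk hkk
    have h1 : 1 ≤ min k (m - 1) := by omega
    have h2 : min k (m - 1) ≤ min k' (m - 1) := by omega
    have h3 : min k' (m - 1) + 1 ≤ m := by omega
    have h4 := gmono (min k (m - 1)) (min k' (m - 1)) h1 h2 h3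
    have h5 : 0 < y (min k (m - 1) + 1) - y (min k (m - 1)) := hg _ h1 (by omega)
    exact one_div_le_one_div_of_le h5 h4
  have hwG : ∀ k : ℕ, t₀ ≤ k → w k ≤ 1 / G := by
    intro k hk
    have h1 : t₀ ≤ min k (m - 1) := by omega
    have h4 := gmono t₀ (min k (m - 1)) ht1 h1 (by omega)
    have : G ≤ y (min k (m - 1) + 1) - y (min k (m - 1)) := le_trans hGt h4
    exact one_div_le_one_div_of_le hG this
  -- floors
  set f : ℕ → ℤ := fun k => ⌊y k⌋ with hfdef
  set n₁ : ℤ := f t₀ with hn₁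
  set n₂ : ℤ := f m with hn₂
  have hn12 : n₁ ≤ n₂ := hfmono t₀ m ht1 (by omega) le_rfl
  set B : ℕ := (n₂ - n₁).toNat + 1 with hB
  -- the crossing function P
  set P : ℤ → ℕ := fun n =>
    (insert (m + 1) ((Finset.Icc t₀ m).filter (fun k => n ≤ f k))).min'
      (Finset.insert_nonempty _ _) with hPdef
  have hP_ge : ∀ n : ℤ, t₀ ≤ P n := by
    intro n
    apply Finset.le_min'
    intro x hx
    rcases Finset.mem_insert.mp hx with h | h
    · omega
    · exact (Finset.mem_Icc.mp (Finset.mem_filter.mp h).1).1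
  have hP_le : ∀ n : ℤ, P n ≤ m + 1 :=
    fun n => Finset.min'_le _ _ (Finset.mem_insert_self _ _)
  have hP_le_of : ∀ (n : ℤ) (k : ℕ), k ∈ Finset.Icc t₀ m → n ≤ f k → P n ≤ k := by
    intro n k hk hnk
    exact Finset.min'_le _ _ (Finset.mem_insert_of_mem (Finset.mem_filter.mpr ⟨hk, hnk⟩))
  have hP_lt : ∀ (n : ℤ) (k : ℕ), k ∈ Finset.Icc t₀ m → k < P n → f k < n := by
    intro n k hk hkP
    by_contra hcon
    push_neg at hcon
    exact absurd (hP_le_of n k hk hcon) (by omega)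
  have hP_mono : ∀ n n' : ℤ, n ≤ n' → P n ≤ P n' := by
    intro n n' hnn
    apply Finset.le_min'
    intro x hx
    rcases Finset.mem_insert.mp hx with h | h
    · rw [h]; exact hP_le n
    · have := Finset.mem_filter.mp h
      exact hP_le_of n x this.1 (le_trans hnn this.2)
  have hP_spec : ∀ n : ℤ, n ≤ n₂ → P n ≤ m ∧ n ≤ f (P n) := by
    intro n hn
    have hm_mem : m ∈ (Finset.Icc t₀ m).filter (fun k => n ≤ f k) :=
      Finset.mem_filter.mpr ⟨Finset.mem_Icc.mpr ⟨by omega, le_rfl⟩, hn⟩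
    have h1 : P n ≤ m := Finset.min'_le _ _ (Finset.mem_insert_of_mem hm_mem)
    have h2 : P n ∈ insert (m + 1) ((Finset.Icc t₀ m).filter (fun k => n ≤ f k)) :=
      Finset.min'_mem _ _
    rcases Finset.mem_insert.mp h2 with h | h
    · omega
    · exact ⟨h1, (Finset.mem_filter.mp h).2⟩
  have hP_n₁ : P n₁ = t₀ := by
    have h1 := hP_ge n₁
    have h2 : P n₁ ≤ t₀ := hP_le_of n₁ t₀ (Finset.mem_Icc.mpr ⟨le_rfl, by omega⟩) le_rfl
    omega
  have hP_top : P (n₂ + 1) = m + 1 := by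
    have h1 := hP_le (n₂ + 1)
    have h2 : m + 1 ≤ P (n₂ + 1) := by
      apply Finset.le_min'
      intro x hx
      rcases Finset.mem_insert.mp hx with h | h
      · omega
      · exfalso
        have h3 := Finset.mem_filter.mp h
        have h4 := Finset.mem_Icc.mp h3.1
        have h5 : f x ≤ n₂ := hfmono x m (by omega) h4.2 le_rfl
        omega
    omega
  -- fibers are intervals
  have hfiber : ∀ n : ℤ, n₁ ≤ n → n ≤ n₂ →
      (Finset.Icc t₀ m).filter (fun k => f k = n) = Finset.Icc (P n) (P (n + 1) - 1) := by
    intro n hn1 hn2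
    ext k
    simp only [Finset.mem_filter, Finset.mem_Icc]
    constructor
    · rintro ⟨⟨hk1, hk2⟩, hfk⟩
      have hPn : P n ≤ k := hP_le_of n k (Finset.mem_Icc.mpr ⟨hk1, hk2⟩) (le_of_eq hfk.symm)
      have hk_lt : k < P (n + 1) := by
        by_contra hcon
        push_neg at hcon
        rcases eq_or_lt_of_le hn2 with heq | hlt
        · have := hP_top
          rw [← heq] at this
          omega
        · have hle : n + 1 ≤ n₂ := by omega
          have hs := hP_spec (n + 1) hle
          have h6 : f (P (n + 1)) ≤ f k :=
            hfmono (P (n + 1)) k (by have := hP_ge (n + 1); omega) hcon hk2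
          omega
      have hge1 : 1 ≤ P (n + 1) := by have := hP_ge (n + 1); omega
      exact ⟨hPn, by omega⟩
    · rintro ⟨hk1, hk2⟩
      have hs := hP_spec n hn2
      have hk_le_m : k ≤ m := by have := hP_le (n + 1); omega
      have hk_ge : t₀ ≤ k := le_trans (hP_ge n) hk1
      have h1 : n ≤ f k := le_trans hs.2 (hfmono (P n) k (by have := hP_ge n; omega) hk1 hk_le_m)
      have h2 : f k < n + 1 := hP_lt (n + 1) k (Finset.mem_Icc.mpr ⟨hk_ge, hk_le_m⟩)
        (by have := hP_ge (n + 1); omega)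
      exact ⟨⟨hk_ge, hk_le_m⟩, by omega⟩
  -- fiber membership: y values lie in [n, n+1)
  have hfloor_mem : ∀ (k : ℕ) (n : ℤ), f k = n → ((n : ℝ) ≤ y k ∧ y k < (n : ℝ) + 1) := by
    intro k n hk
    rw [hfdef] at hk
    simp only at hk
    constructor
    · rw [← hk]; exact Int.floor_le _
    · rw [← hk]; push_cast; exact Int.lt_floor_add_one _
  have hfract_iff : ∀ (k : ℕ) (n : ℤ), f k = n →
      (Pred k ↔ y k ∈ Set.Ico ((n : ℝ) + α) ((n : ℝ) + β)) := by
    intro k n hk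
    rw [hPred]
    simp only [Set.mem_Ico, Int.fract]
    rw [hfdef] at hk
    simp only at hk
    rw [hk]
    constructor
    · rintro ⟨h1, h2⟩; constructor <;> linarith
    · rintro ⟨h1, h2⟩; constructor <;> linarith
  classical
  -- split into head and tail
  have hsplit : Finset.Icc 1 m = Finset.Ico 1 t₀ ∪ Finset.Icc t₀ m := by
    ext k
    simp only [Finset.mem_Icc, Finset.mem_Ico, Finset.mem_union]
    omega
  have hdisj : Disjoint ((Finset.Ico 1 t₀).filter Pred) ((Finset.Icc t₀ m).filter Pred) := by
    rw [Finset.disjoint_left]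
    intro k hk hk'
    have h1 := (Finset.mem_Ico.mp (Finset.mem_of_mem_filter k hk)).2
    have h2 := (Finset.mem_Icc.mp (Finset.mem_of_mem_filter k hk')).1
    omega
  have hcard_split : (((Finset.Icc 1 m).filter Pred).card : ℝ)
      = ((Finset.Ico 1 t₀).filter Pred).card + ((Finset.Icc t₀ m).filter Pred).card := by
    rw [hsplit, Finset.filter_union, Finset.card_union_of_disjoint hdisj]
    push_cast
    ring
  -- head bound
  have hheadcard : (((Finset.Ico 1 t₀).filter Pred).card : ℝ) ≤ (t₀ : ℝ) - 1 := by
    have h1 : ((Finset.Ico 1 t₀).filter Pred).card ≤ t₀ - 1 := by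
      calc ((Finset.Ico 1 t₀).filter Pred).card ≤ (Finset.Ico 1 t₀).card :=
          Finset.card_filter_le _ _
        _ = t₀ - 1 := by rw [Nat.card_Ico]
    calc (((Finset.Ico 1 t₀).filter Pred).card : ℝ) ≤ ((t₀ - 1 : ℕ) : ℝ) := by exact_mod_cast h1
      _ = (t₀ : ℝ) - 1 := by push_cast [ht1]; ring
  have hhead : |(((Finset.Ico 1 t₀).filter Pred).card : ℝ) - ((t₀ : ℝ) - 1) * ℓ|
      ≤ (t₀ : ℝ) - 1 := by
    rw [abs_le]
    have h0 : (0 : ℝ) ≤ ((Finset.Ico 1 t₀).filter Pred).card := Nat.cast_nonneg _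
    have h1 : 0 ≤ ((t₀ : ℝ) - 1) * ℓ := by
      apply mul_nonneg _ hℓ0.le
      have : (1 : ℝ) ≤ t₀ := by exact_mod_cast ht1
      linarith
    have h2 : ((t₀ : ℝ) - 1) * ℓ ≤ (t₀ : ℝ) - 1 := by
      nlinarith [hheadcard]
    constructor <;> nlinarith
  -- tail fiberwise decomposition
  set tc := Finset.Icc t₀ m with htc
  set S := tc.filter Pred with hSdef
  set blocks : Finset ℤ := Finset.image (fun i : ℕ => n₁ + (i : ℤ)) (Finset.range B) with hblocks
  have hrange : ∀ k ∈ tc, f k ∈ blocks := by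
    intro k hk
    have hk' := Finset.mem_Icc.mp hk
    have h1 : n₁ ≤ f k := hfmono t₀ k ht1 hk'.1 hk'.2
    have h2 : f k ≤ n₂ := hfmono k m (by omega) hk'.2 le_rfl
    have hi : (f k - n₁).toNat < B := by omega
    have he : n₁ + ((f k - n₁).toNat : ℤ) = f k := by omega
    rw [hblocks]
    simp only [Finset.mem_image, Finset.mem_range]
    exact ⟨(f k - n₁).toNat, hi, he⟩
  have hrangeS : ∀ k ∈ S, f k ∈ blocks := fun k hk => hrange k (Finset.mem_of_mem_filter k hk)
  have hNsum : S.card = ∑ n ∈ blocks, (S.filter (fun k => f k = n)).card :=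
    Finset.card_eq_sum_card_fiberwise hrangeS
  have hLsum : tc.card = ∑ n ∈ blocks, (tc.filter (fun k => f k = n)).card :=
    Finset.card_eq_sum_card_fiberwise hrange
  -- swap filters
  have hswap : ∀ n : ℤ, S.filter (fun k => f k = n) = (tc.filter (fun k => f k = n)).filter Pred := by
    intro n
    rw [hSdef, Finset.filter_filter, Finset.filter_filter]
    apply Finset.filter_congr
    intro k _
    constructor
    · rintro ⟨h1, h2⟩; exact ⟨h2, h1⟩
    · rintro ⟨h1, h2⟩; exact ⟨h2, h1⟩
  -- per-block error bound
  have hblockerr : ∀ n : ℤ, n₁ ≤ n → n ≤ n₂ →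
      |((S.filter (fun k => f k = n)).card : ℝ) - ℓ * (tc.filter (fun k => f k = n)).card|
      ≤ (if n = n₁ ∨ n = n₂ then 1 / G + 1 else 2) + (w (P n) - w (P (n + 1))) := by
    intro n hn1 hn2
    have hsp := hP_spec n hn2
    have hp1 : 1 ≤ P n := le_trans ht1 (hP_ge n)
    have hpm : P n ≤ m := hsp.1
    have hq1 : (P (n + 1) - 1) + 1 = P (n + 1) := by have := hP_ge (n + 1); omega
    have hqm : P (n + 1) - 1 ≤ m := by have := hP_le (n + 1); omega
    have hwdiff : 0 ≤ w (P n) - w (P (n + 1)) := by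
      have h1 := hP_mono n (n + 1) (by omega)
      linarith [hwanti (P n) (P (n + 1)) (by omega) h1]
    have hfib : tc.filter (fun k => f k = n) = Finset.Icc (P n) (P (n + 1) - 1) :=
      hfiber n hn1 hn2
    have hLwin : Finset.Icc (P n) (P (n + 1) - 1)
        = (Finset.Icc (P n) (P (n + 1) - 1)).filter
            (fun k => y k ∈ Set.Ico ((n : ℝ)) ((n : ℝ) + 1)) := by
      symm
      apply Finset.filter_true_of_mem
      intro k hk
      have hk' : k ∈ tc.filter (fun k => f k = n) := by rw [hfib]; exact hk
      have h2 := hfloor_mem k n (Finset.mem_filter.mp hk').2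
      exact Set.mem_Ico.mpr h2
    have hNwin : S.filter (fun k => f k = n)
        = (Finset.Icc (P n) (P (n + 1) - 1)).filter
            (fun k => y k ∈ Set.Ico ((n : ℝ) + α) ((n : ℝ) + β)) := by
      rw [hswap n, hfib]
      apply Finset.filter_congr
      intro k hk
      have hk' : k ∈ tc.filter (fun k => f k = n) := by rw [hfib]; exact hk
      exact hfract_iff k n (Finset.mem_filter.mp hk').2
    have hwp_eq : w (P n) = 1 / (y (min (P n) (m - 1) + 1) - y (min (P n) (m - 1))) := by
      simp only [hw]
    have hcU : 0 < y (min (P n) (m - 1) + 1) - y (min (P n) (m - 1)) :=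
      hg _ (by omega) (by omega)
    have hgapU : ∀ k, P n ≤ k → k < P (n + 1) - 1 →
        y (min (P n) (m - 1) + 1) - y (min (P n) (m - 1)) ≤ y (k + 1) - y k := by
      intro k hk1 hk2
      exact gmono (min (P n) (m - 1)) k (by omega) (by omega) (by omega)
    have hNub : ((S.filter (fun k => f k = n)).card : ℝ) ≤ ℓ * w (P n) + 1 := by
      rw [hNwin]
      have h3 := count_upper hg (P n) (P (n + 1) - 1) hp1 hqm ((n : ℝ) + α) ((n : ℝ) + β)
        _ (by linarith) hcU hgapU
      have h4 : ((n : ℝ) + β) - ((n : ℝ) + α) = ℓ := by rw [hℓ]; ring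
      rw [h4, div_eq_mul_one_div, ← hwp_eq] at h3
      exact h3
    have hLub : (((tc.filter (fun k => f k = n)).card : ℝ)) ≤ w (P n) + 1 := by
      rw [hfib, hLwin]
      have h3 := count_upper hg (P n) (P (n + 1) - 1) hp1 hqm ((n : ℝ)) ((n : ℝ) + 1)
        _ (by linarith) hcU hgapU
      have h4 : ((n : ℝ) + 1) - (n : ℝ) = 1 := by ring
      rw [h4, ← hwp_eq] at h3
      exact h3
    have hNleL : (S.filter (fun k => f k = n)).card ≤ (tc.filter (fun k => f k = n)).card := by
      apply Finset.card_le_card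
      rw [hswap n]
      exact Finset.filter_subset _ _
    have hN0 : (0 : ℝ) ≤ ((S.filter (fun k => f k = n)).card : ℝ) := Nat.cast_nonneg _
    have hL0 : (0 : ℝ) ≤ ((tc.filter (fun k => f k = n)).card : ℝ) := Nat.cast_nonneg _
    have hNL : ((S.filter (fun k => f k = n)).card : ℝ)
        ≤ ((tc.filter (fun k => f k = n)).card : ℝ) := by exact_mod_cast hNleL
    by_cases hedge : n = n₁ ∨ n = n₂
    · rw [if_pos hedge]
      have hwpG : w (P n) ≤ 1 / G := hwG (P n) (hP_ge n)
      rw [abs_le]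
      constructor
      · nlinarith
      · nlinarith
    · rw [if_neg hedge]
      push_neg at hedge
      have hn1' : n₁ < n := lt_of_le_of_ne hn1 (Ne.symm hedge.1)
      have hn2' : n < n₂ := lt_of_le_of_ne hn2 hedge.2
      by_cases hne : P n ≤ P (n + 1) - 1
      case neg =>
        have hempty : Finset.Icc (P n) (P (n + 1) - 1) = ∅ := Finset.Icc_eq_empty (by omega)
        have hL_eq : (tc.filter (fun k => f k = n)).card = 0 := by
          rw [hfib, hempty, Finset.card_empty]
        have hN_eq : (S.filter (fun k => f k = n)).card = 0 := by omega
        rw [hL_eq, hN_eq]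
        simp only [Nat.cast_zero, mul_zero, sub_zero, abs_zero]
        linarith
      case pos =>
        have hpt : t₀ + 1 ≤ P n := by
          by_contra hcon
          have hpe : P n = t₀ := by have := hP_ge n; omega
          have h5 : n ≤ f t₀ := by rw [← hpe]; exact hsp.2
          omega
        have hq1m : (P (n + 1) - 1) + 1 ≤ m := by
          have := (hP_spec (n + 1) (by omega)).1
          omega
        have hsq := hP_spec (n + 1) (by omega)
        set q : ℕ := P (n + 1) - 1 with hqdef
        have hqm1 : q ≤ m - 1 := by omega
        have hcL : 0 < y (q + 1) - y q := hg q (by omega) (by omega)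
        have hgapL : ∀ k, P n - 1 ≤ k → k ≤ q → y (k + 1) - y k ≤ y (q + 1) - y q :=
          fun k hk1 hk2 => gmono k q (by omega) hk2 (by omega)
        have hyp1 : y (P n - 1) < (n : ℝ) := by
          have hfp : f (P n - 1) < n := hP_lt n (P n - 1)
            (Finset.mem_Icc.mpr ⟨by omega, by omega⟩) (by omega)
          have h1 : y (P n - 1) < (f (P n - 1) : ℝ) + 1 := Int.lt_floor_add_one _
          have h2 : ((f (P n - 1) : ℝ)) + 1 ≤ (n : ℝ) := by
            have : f (P n - 1) + 1 ≤ n := by omega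
            exact_mod_cast this
          linarith
        have hyq1 : ((n : ℝ)) + 1 ≤ y (q + 1) := by
          have hfq : n + 1 ≤ f (q + 1) := by rw [hq1]; exact hsq.2
          calc ((n : ℝ)) + 1 = ((n + 1 : ℤ) : ℝ) := by push_cast; ring
            _ ≤ (f (q + 1) : ℝ) := by exact_mod_cast hfq
            _ ≤ y (q + 1) := Int.floor_le _
        have hins : Finset.Icc (P n - 1) q = insert (P n - 1) (Finset.Icc (P n) q) := by
          ext k
          simp only [Finset.mem_insert, Finset.mem_Icc]
          omega
        -- relation between w (P (n+1)) and the gap at q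
        have hwq : w (P (n + 1)) ≤ 1 / (y (q + 1) - y q) := by
          have h6 : y (q + 1) - y q
              ≤ y (min (P (n + 1)) (m - 1) + 1) - y (min (P (n + 1)) (m - 1)) := by
            apply gmono q (min (P (n + 1)) (m - 1)) (by omega) (by omega) (by omega)
          have h7 : w (P (n + 1))
              = 1 / (y (min (P (n + 1)) (m - 1) + 1) - y (min (P (n + 1)) (m - 1))) := by
            simp only [hw]
          rw [h7]
          exact one_div_le_one_div_of_le hcL h6
        have hwq0 : 0 < w (P (n + 1)) := hwpos _ (by have := hP_ge (n + 1); omega)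
        -- lower bound for N
        have hNlb : ℓ * w (P (n + 1)) - 1 ≤ ((S.filter (fun k => f k = n)).card : ℝ) := by
          have h3 := count_lower hg (P n - 1) q (by omega) (by omega) (by omega)
            ((n : ℝ) + α) ((n : ℝ) + β) _ hcL (fun k hk1 hk2 => hgapL k hk1 hk2)
            (by linarith) (by linarith) (by linarith)
          have h4 : (Finset.Icc (P n - 1) q).filter
              (fun k => y k ∈ Set.Ico ((n : ℝ) + α) ((n : ℝ) + β))
              = (Finset.Icc (P n) q).filter
                  (fun k => y k ∈ Set.Ico ((n : ℝ) + α) ((n : ℝ) + β)) := by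
            rw [hins, Finset.filter_insert, if_neg]
            intro hmem
            have := (Set.mem_Ico.mp hmem).1
            linarith
          rw [h4] at h3
          have h5 : ((n : ℝ) + β) - ((n : ℝ) + α) = ℓ := by rw [hℓ]; ring
          rw [h5] at h3
          have h6 : ℓ * w (P (n + 1)) - 1 ≤ ℓ / (y (q + 1) - y q) - 1 := by
            rw [div_eq_mul_one_div]
            have := mul_le_mul_of_nonneg_left hwq hℓ0.le
            linarith
          rw [hNwin]
          exact le_trans h6 h3
        -- lower bound for L
        have hLlb : w (P (n + 1)) - 1 ≤ ((tc.filter (fun k => f k = n)).card : ℝ) := by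
          have h3 := count_lower hg (P n - 1) q (by omega) (by omega) (by omega)
            ((n : ℝ)) ((n : ℝ) + 1) _ hcL (fun k hk1 hk2 => hgapL k hk1 hk2)
            (by linarith) (by linarith) (by linarith)
          have h4 : (Finset.Icc (P n - 1) q).filter
              (fun k => y k ∈ Set.Ico ((n : ℝ)) ((n : ℝ) + 1))
              = (Finset.Icc (P n) q).filter
                  (fun k => y k ∈ Set.Ico ((n : ℝ)) ((n : ℝ) + 1)) := by
            rw [hins, Finset.filter_insert, if_neg]
            intro hmem
            have := (Set.mem_Ico.mp hmem).1
            linarith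
          rw [h4] at h3
          have h5 : ((n : ℝ) + 1) - (n : ℝ) = 1 := by ring
          rw [h5] at h3
          have h6 : w (P (n + 1)) - 1 ≤ 1 / (y (q + 1) - y q) - 1 := by linarith
          rw [hfib, hLwin]
          exact le_trans h6 h3
        -- combine
        rw [abs_le]
        constructor
        · nlinarith
        · nlinarith
  -- sum the block errors
  have htailerr : |((S.card : ℝ)) - ℓ * tc.card| ≤ 2 * (1 / G + 1) + 2 * B + 1 / G := by
    have hGpos : (0:ℝ) < 1 / G + 1 := by positivity
    have hmem_blocks : ∀ n ∈ blocks, n₁ ≤ n ∧ n ≤ n₂ := by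
      intro n hn
      rw [hblocks] at hn
      simp only [Finset.mem_image, Finset.mem_range] at hn
      obtain ⟨i, hi, rfl⟩ := hn
      omega
    have h1 : ((S.card : ℝ)) - ℓ * tc.card
        = ∑ n ∈ blocks, (((S.filter (fun k => f k = n)).card : ℝ)
            - ℓ * (tc.filter (fun k => f k = n)).card) := by
      rw [Finset.sum_sub_distrib, ← Finset.mul_sum]
      have c1 : ((S.card : ℝ)) = ∑ n ∈ blocks, ((S.filter (fun k => f k = n)).card : ℝ) := by
        rw [hNsum]; push_cast; ring
      have c2 : ((tc.card : ℝ)) = ∑ n ∈ blocks, ((tc.filter (fun k => f k = n)).card : ℝ) := by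
        rw [hLsum]; push_cast; ring
      rw [← c1, ← c2]
    have h2 : ∑ n ∈ blocks, (((S.filter (fun k => f k = n)).card : ℝ)
            - ℓ * (tc.filter (fun k => f k = n)).card)
        ≤ ∑ n ∈ blocks, |(((S.filter (fun k => f k = n)).card : ℝ)
            - ℓ * (tc.filter (fun k => f k = n)).card)| :=
      Finset.sum_le_sum (fun n _ => le_abs_self _)
    have habs : |((S.card : ℝ)) - ℓ * tc.card|
        ≤ ∑ n ∈ blocks, |(((S.filter (fun k => f k = n)).card : ℝ)
            - ℓ * (tc.filter (fun k => f k = n)).card)| := by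
      rw [h1]
      exact Finset.abs_sum_le_sum_abs _ _
    have hstep : ∑ n ∈ blocks, |(((S.filter (fun k => f k = n)).card : ℝ)
            - ℓ * (tc.filter (fun k => f k = n)).card)|
        ≤ ∑ n ∈ blocks, ((if n = n₁ ∨ n = n₂ then 1 / G + 1 else 2) + (w (P n) - w (P (n + 1)))) :=
      Finset.sum_le_sum (fun n hn => hblockerr n (hmem_blocks n hn).1 (hmem_blocks n hn).2)
    rw [Finset.sum_add_distrib] at hstep
    have hinj : ∀ x ∈ Finset.range B, ∀ x' ∈ Finset.range B,
        n₁ + (x : ℤ) = n₁ + (x' : ℤ) → x = x' := by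
      intro x _ x' _ h; omega
    -- telescoping part
    have htel0 : ∑ i ∈ Finset.range B, (w (P (n₁ + (i : ℤ))) - w (P (n₁ + ((i + 1 : ℕ) : ℤ))))
        = w (P (n₁ + ((0 : ℕ) : ℤ))) - w (P (n₁ + (B : ℤ))) :=
      Finset.sum_range_sub' (fun j : ℕ => w (P (n₁ + (j : ℤ)))) B
    have htel : ∑ n ∈ blocks, (w (P n) - w (P (n + 1))) ≤ 1 / G := by
      rw [hblocks, Finset.sum_image hinj]
      have heq : ∀ i ∈ Finset.range B,
          w (P (n₁ + (i : ℤ))) - w (P (n₁ + (i : ℤ) + 1))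
          = w (P (n₁ + (i : ℤ))) - w (P (n₁ + ((i + 1 : ℕ) : ℤ))) := by
        intro i _
        have harg : n₁ + (i : ℤ) + 1 = n₁ + ((i + 1 : ℕ) : ℤ) := by push_cast; ring
        rw [harg]
      rw [Finset.sum_congr rfl heq, htel0]
      have hW0 : w (P (n₁ + ((0 : ℕ) : ℤ))) ≤ 1 / G := by
        apply hwG
        have harg : (n₁ + ((0 : ℕ) : ℤ)) = n₁ := by push_cast; ring
        rw [harg]
        exact hP_ge n₁
      have hWB : 0 < w (P (n₁ + (B : ℤ))) := hwpos _ (by have := hP_ge (n₁ + B); omega)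
      linarith
    -- indicator part
    have hind : ∑ n ∈ blocks, (if n = n₁ ∨ n = n₂ then 1 / G + 1 else 2)
        ≤ 2 * (1 / G + 1) + 2 * B := by
      have hper : ∀ n ∈ blocks, (if n = n₁ ∨ n = n₂ then 1 / G + 1 else 2)
          ≤ (if n = n₁ then 1 / G + 1 else 0) + (if n = n₂ then 1 / G + 1 else 0) + 2 := by
        intro n _
        split_ifs with h h1 h2 h3 h4 h5 h6 <;> first | (exfalso; tauto) | linarith
      have hsum1 : ∑ n ∈ blocks, ((if n = n₁ then 1 / G + 1 else 0)
          + (if n = n₂ then 1 / G + 1 else 0) + 2)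
          = (if n₁ ∈ blocks then 1 / G + 1 else 0) + (if n₂ ∈ blocks then 1 / G + 1 else 0)
            + 2 * blocks.card := by
        rw [Finset.sum_add_distrib, Finset.sum_add_distrib,
          Finset.sum_ite_eq' blocks n₁ (fun _ => 1 / G + 1),
          Finset.sum_ite_eq' blocks n₂ (fun _ => 1 / G + 1), Finset.sum_const,
          nsmul_eq_mul]
        ring
      have hcard : blocks.card ≤ B := by
        calc blocks.card ≤ (Finset.range B).card := by
              rw [hblocks]; exact Finset.card_image_le
          _ = B := Finset.card_range B
      have hc : (blocks.card : ℝ) ≤ B := by exact_mod_cast hcard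
      calc ∑ n ∈ blocks, (if n = n₁ ∨ n = n₂ then 1 / G + 1 else 2)
          ≤ ∑ n ∈ blocks, ((if n = n₁ then 1 / G + 1 else 0)
              + (if n = n₂ then 1 / G + 1 else 0) + 2) := Finset.sum_le_sum hper
        _ = (if n₁ ∈ blocks then 1 / G + 1 else 0) + (if n₂ ∈ blocks then 1 / G + 1 else 0)
              + 2 * blocks.card := hsum1
        _ ≤ 2 * (1 / G + 1) + 2 * B := by
            split_ifs <;> linarith
    linarith
  -- cardinality of tc
  have htccard : (tc.card : ℝ) = (m : ℝ) - t₀ + 1 := by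
    rw [htc, Nat.card_Icc]
    have h : t₀ ≤ m + 1 := by omega
    push_cast [h]
    ring
  have hBbound : (B : ℝ) ≤ (y m - y 1) + 2 := by
    have h1 : ((n₂ - n₁).toNat : ℝ) = ((n₂ : ℝ) - n₁) := by
      have h0 : ((n₂ - n₁).toNat : ℤ) = n₂ - n₁ := Int.toNat_of_nonneg (by omega)
      exact_mod_cast h0
    have h2 : (n₂ : ℝ) ≤ y m := Int.floor_le _
    have h3 : y t₀ - 1 < (n₁ : ℝ) := by
      have := Int.lt_floor_add_one (y t₀)
      rw [hn₁, hfdef]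
      simp only
      linarith
    have h4 : y 1 ≤ y t₀ := hmono 1 t₀ le_rfl ht1 (by omega)
    rw [hB]
    push_cast
    rw [h1]
    linarith
  -- put it together
  have hfinal : |(((Finset.Icc 1 m).filter Pred).card : ℝ) - (m : ℝ) * ℓ|
      ≤ ((t₀ : ℝ) - 1) + 3 / G + 2 * (y m - y 1) + 6 := by
    have hm_split : (m : ℝ) * ℓ = ((t₀ : ℝ) - 1) * ℓ + ℓ * tc.card := by
      rw [htccard]; ring
    rw [hcard_split, hm_split]
    have h1 := abs_add_le ((((Finset.Ico 1 t₀).filter Pred).card : ℝ) - ((t₀ : ℝ) - 1) * ℓ)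
      (((S.card : ℝ)) - ℓ * tc.card)
    have hG1 : 0 < 1 / G := by positivity
    calc |(((Finset.Ico 1 t₀).filter Pred).card : ℝ) + (S.card : ℝ)
        - (((t₀ : ℝ) - 1) * ℓ + ℓ * tc.card)|
        ≤ |(((Finset.Ico 1 t₀).filter Pred).card : ℝ) - ((t₀ : ℝ) - 1) * ℓ|
          + |((S.card : ℝ)) - ℓ * tc.card| := by
          apply le_trans (le_of_eq (by ring_nf)) h1
      _ ≤ ((t₀ : ℝ) - 1) + (2 * (1 / G + 1) + 2 * B + 1 / G) := add_le_add hhead htailerr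
      _ ≤ ((t₀ : ℝ) - 1) + 3 / G + 2 * (y m - y 1) + 6 := by
          have := hBbound
          rw [show (3 : ℝ) / G = 3 * (1 / G) by ring]
          linarith
  exact hfinal
end Main
section Pigeon
lemma pigeonhole_bound (m : ℕ) (y : ℕ → ℝ) (K G : ℝ) (hm3 : 3 ≤ m) (hK : 1 ≤ K) (hG : 0 < G)
    (hg : ∀ k : ℕ, 1 ≤ k → k + 1 ≤ m → 0 < y (k + 1) - y k)
    (hdd : ∀ n j : ℕ, 1 ≤ n → n < j → j + 2 ≤ m →
      y (j + 2) - 2 * y (j + 1) + y j ≤ K * (y (n + 2) - 2 * y (n + 1) + y n))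
    (t₀ : ℕ) (ht1 : 1 ≤ t₀) (ht2 : t₀ + 1 ≤ m)
    (hsmall : ∀ k : ℕ, 1 ≤ k → k < t₀ → y (k + 1) - y k < G)
    (hy : y 1 ≤ y m) :
    ((t₀ : ℝ) - 2) * ((y m - y 1) - m * G) ≤ (m : ℝ) ^ 2 * K * G := by
  have hm0 : (0 : ℝ) < m := by positivity
  have hmR : (3 : ℝ) ≤ m := by exact_mod_cast hm3
  have ha0 : 0 ≤ y m - y 1 := by linarith
  -- total gap sum
  have hsum_gaps : ∑ k ∈ Finset.Icc 1 (m - 1), (y (k + 1) - y k) = y m - y 1 := by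
    have := sum_Icc_telescope y 1 (m - 1) (by omega)
    rwa [show m - 1 + 1 = m by omega] at this
  rcases le_or_gt t₀ 2 with ht2' | ht3
  · -- trivial case t₀ ≤ 2
    have h1 : ((t₀ : ℝ) - 2) ≥ -1 := by
      have : (1 : ℝ) ≤ t₀ := by exact_mod_cast ht1
      linarith
    have h2 : ((t₀ : ℝ) - 2) ≤ 0 := by
      have : (t₀ : ℝ) ≤ 2 := by exact_mod_cast ht2'
      linarith
    have h3' : 0 ≤ ((m : ℝ) * K - 1) * ((m : ℝ) * G) :=
      mul_nonneg (by nlinarith) (by positivity)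
    have h3 : (m : ℝ) * G ≤ (m : ℝ) ^ 2 * K * G := by nlinarith [h3']
    have h4 : ((t₀ : ℝ) - 2) * (y m - y 1) ≤ 0 :=
      mul_nonpos_of_nonpos_of_nonneg h2 ha0
    have h5 : (-((t₀ : ℝ) - 2)) * ((m : ℝ) * G) ≤ 1 * ((m : ℝ) * G) :=
      mul_le_mul_of_nonneg_right (by linarith) (by positivity)
    nlinarith [h4, h5, h3]
  · -- main case: t₀ ≥ 3
    set r : ℕ := t₀ - 2 with hr
    have hr1 : 1 ≤ r := by omega
    have hrt : r + 2 = t₀ := by omega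
    -- sum of second differences over [1, r]
    have htel : ∑ k ∈ Finset.Icc 1 r, ((y (k + 1 + 1) - y (k + 1)) - (y (k + 1) - y k))
        = (y (r + 1 + 1) - y (r + 1)) - (y (1 + 1) - y 1) :=
      sum_Icc_telescope (fun k => y (k + 1) - y k) 1 r (by omega)
    have hsum_lt : ∑ k ∈ Finset.Icc 1 r, ((y (k + 1 + 1) - y (k + 1)) - (y (k + 1) - y k)) < G := by
      rw [htel]
      have h1 : y (r + 1 + 1) - y (r + 1) < G := by
        have := hsmall (r + 1) (by omega) (by omega)
        convert this using 3 <;> omega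
      have h2 : 0 < y (1 + 1) - y 1 := hg 1 le_rfl (by omega)
      linarith
    -- pigeonhole
    have hpig : ∃ nn ∈ Finset.Icc 1 r,
        (y (nn + 1 + 1) - y (nn + 1)) - (y (nn + 1) - y nn) ≤ G / r := by
      apply Finset.exists_le_of_sum_le ⟨1, Finset.mem_Icc.mpr ⟨le_rfl, hr1⟩⟩
      have hcard : (Finset.Icc 1 r).card = r := by rw [Nat.card_Icc]; omega
      rw [Finset.sum_const, hcard, nsmul_eq_mul]
      have hrpos : (0 : ℝ) < r := by exact_mod_cast hr1
      rw [mul_div_cancel₀ _ hrpos.ne']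
      exact hsum_lt.le
    obtain ⟨nn, hnn_mem, hdn⟩ := hpig
    have hnn := Finset.mem_Icc.mp hnn_mem
    have hrpos : (0 : ℝ) < r := by exact_mod_cast hr1
    have hdn' : y (nn + 2) - 2 * y (nn + 1) + y nn ≤ G / r := by
      have : y (nn + 1 + 1) = y (nn + 2) := by norm_num
      rw [this] at hdn
      linarith
    -- all later second differences small
    have hlater : ∀ j : ℕ, nn < j → j + 2 ≤ m →
        y (j + 2) - 2 * y (j + 1) + y j ≤ K * (G / r) := by
      intro j h1 h2
      calc y (j + 2) - 2 * y (j + 1) + y j ≤ K * (y (nn + 2) - 2 * y (nn + 1) + y nn) :=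
          hdd nn j (by omega) h1 h2
        _ ≤ K * (G / r) := by
            apply mul_le_mul_of_nonneg_left hdn' (by linarith)
    -- all gaps bounded
    have hgap_bound : ∀ k : ℕ, 1 ≤ k → k + 1 ≤ m →
        y (k + 1) - y k ≤ G + (m : ℝ) * (K * (G / r)) := by
      intro k hk1 hk2
      have hKGr : 0 ≤ K * (G / r) := by positivity
      rcases lt_or_ge k t₀ with hlt | hge
      · have := hsmall k hk1 hlt
        nlinarith
      · -- k ≥ t₀ : telescope from t₀ - 1
        have htel2 : ∑ j ∈ Finset.Icc (t₀ - 1) (k - 1),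
            ((y (j + 1 + 1) - y (j + 1)) - (y (j + 1) - y j))
            = (y (k - 1 + 1 + 1) - y (k - 1 + 1)) - (y (t₀ - 1 + 1) - y (t₀ - 1)) :=
          sum_Icc_telescope (fun j => y (j + 1) - y j) (t₀ - 1) (k - 1) (by omega)
        have hsum_le : ∑ j ∈ Finset.Icc (t₀ - 1) (k - 1),
            ((y (j + 1 + 1) - y (j + 1)) - (y (j + 1) - y j)) ≤ (m : ℝ) * (K * (G / r)) := by
          calc ∑ j ∈ Finset.Icc (t₀ - 1) (k - 1),
              ((y (j + 1 + 1) - y (j + 1)) - (y (j + 1) - y j))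
              ≤ ∑ _j ∈ Finset.Icc (t₀ - 1) (k - 1), K * (G / r) := by
                apply Finset.sum_le_sum
                intro j hj
                have hj' := Finset.mem_Icc.mp hj
                have h5 : y (j + 2) - 2 * y (j + 1) + y j ≤ K * (G / r) :=
                  hlater j (by omega) (by omega)
                have h6 : y (j + 1 + 1) = y (j + 2) := by norm_num
                rw [h6]
                linarith
            _ ≤ (m : ℝ) * (K * (G / r)) := by
                rw [Finset.sum_const, nsmul_eq_mul, Nat.card_Icc]
                apply mul_le_mul_of_nonneg_right _ hKGr
                have : k - 1 + 1 - (t₀ - 1) ≤ m := by omega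
                exact_mod_cast this
        have hfirst : y (t₀ - 1 + 1) - y (t₀ - 1) < G := by
          have := hsmall (t₀ - 1) (by omega) (by omega)
          convert this using 3
        have hke : k - 1 + 1 + 1 = k + 1 ∧ k - 1 + 1 = k := by omega
        rw [hke.1, hke.2] at htel2
        linarith [htel2 ▸ hsum_le]
    -- sum all gaps
    have hsum_le2 : y m - y 1 ≤ ((m : ℝ) - 1) * (G + (m : ℝ) * (K * (G / r))) := by
      rw [← hsum_gaps]
      calc ∑ k ∈ Finset.Icc 1 (m - 1), (y (k + 1) - y k)
          ≤ ∑ _k ∈ Finset.Icc 1 (m - 1), (G + (m : ℝ) * (K * (G / r))) := by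
            apply Finset.sum_le_sum
            intro k hk
            have hk' := Finset.mem_Icc.mp hk
            exact hgap_bound k hk'.1 (by omega)
        _ = ((m : ℝ) - 1) * (G + (m : ℝ) * (K * (G / r))) := by
            rw [Finset.sum_const, nsmul_eq_mul, Nat.card_Icc]
            congr 1
            have : ((m - 1 + 1 - 1 : ℕ) : ℝ) = (m : ℝ) - 1 := by
              have h9 : m - 1 + 1 - 1 = m - 1 := by omega
              rw [h9]
              push_cast [show 1 ≤ m by omega]
              ring
            rw [this]
    -- rearrange
    have hrR : ((t₀ : ℝ) - 2) = (r : ℝ) := by push_cast [hr, show 2 ≤ t₀ by omega]; ring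
    rw [hrR]
    have hKG : 0 ≤ K * (G / r) := by positivity
    have hexp : ((m : ℝ) - 1) * (G + (m : ℝ) * (K * (G / r))) ≤ (m:ℝ) * G + (m:ℝ)^2 * K * G / r := by
      have h1 : ((m:ℝ) - 1) ≤ m := by linarith
      have h2 : 0 < G + (m : ℝ) * (K * (G / r)) := by positivity
      calc ((m : ℝ) - 1) * (G + (m : ℝ) * (K * (G / r)))
          ≤ (m : ℝ) * (G + (m : ℝ) * (K * (G / r))) := by nlinarith
        _ = (m:ℝ) * G + (m:ℝ)^2 * K * G / r := by field_simp
    have hfin : y m - y 1 - (m:ℝ) * G ≤ (m:ℝ)^2 * K * G / r := by linarith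
    have hfin2 : (r : ℝ) * (y m - y 1 - (m:ℝ) * G) ≤ (r : ℝ) * ((m:ℝ)^2 * K * G / r) :=
      mul_le_mul_of_nonneg_left hfin (by positivity)
    have hfin3 : (r : ℝ) * ((m:ℝ)^2 * K * G / r) = (m:ℝ)^2 * K * G := by
      field_simp
    linarith [hfin2, hfin3]
end Pigeon
set_option maxHeartbeats 2000000

open scoped Classical in
/-- Discrepancy of the finite sequence `(y k)` for `k` in the index set `s`. -/
noncomputable def disc (s : Finset ℕ) (y : ℕ → ℝ) : ℝ :=
  ⨆ p : {p : ℝ × ℝ // 0 ≤ p.1 ∧ p.1 < p.2 ∧ p.2 ≤ 1},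
    |((s.filter fun k => Int.fract (y k) ∈ Set.Ico p.1.1 p.1.2).card : ℝ) / s.card
      - (p.1.2 - p.1.1)|

/-- Lemma 6 (L1): discrepancy bound for an increasing sequence whose second
differences are positive and weakly-decreasing. -/
theorem disc_le_weakly_decreasing :
    ∃ C : ℝ, 0 < C ∧ ∀ (m : ℕ) (y : ℕ → ℝ) (K : ℝ), 3 ≤ m → 1 ≤ K →
      (∀ k : ℕ, 1 ≤ k → k + 1 ≤ m → 0 < y (k + 1) - y k) →
      (∀ k : ℕ, 1 ≤ k → k + 2 ≤ m → 0 < y (k + 2) - 2 * y (k + 1) + y k) →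
      (∀ n j : ℕ, 1 ≤ n → n < j → j + 2 ≤ m →
        y (j + 2) - 2 * y (j + 1) + y j ≤ K * (y (n + 2) - 2 * y (n + 1) + y n)) →
      y 1 < y m →
      disc (Finset.Icc 1 m) y ≤
        C * ((y m - y 1) / m + K / Real.sqrt (y m - y 1)) := by
  classical
  refine ⟨100, by norm_num, ?_⟩
  intro m y K hm3 hK hg hd hdd hy
  have hm0 : (0 : ℝ) < m := by
    have : (3 : ℝ) ≤ m := by exact_mod_cast hm3
    linarith
  have ha0 : (0 : ℝ) < y m - y 1 := by linarith
  have hsq0 : 0 < Real.sqrt (y m - y 1) := Real.sqrt_pos.mpr ha0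
  have hsqsq : Real.sqrt (y m - y 1) * Real.sqrt (y m - y 1) = y m - y 1 :=
    Real.mul_self_sqrt ha0.le
  have hKpos : (0 : ℝ) < K := by linarith
  have hterm1 : 0 < (y m - y 1) / m := by positivity
  have hterm2 : 0 < K / Real.sqrt (y m - y 1) := by positivity
  haveI hne : Nonempty {p : ℝ × ℝ // 0 ≤ p.1 ∧ p.1 < p.2 ∧ p.2 ≤ 1} :=
    ⟨⟨(0, 1), by norm_num⟩⟩
  unfold disc
  apply ciSup_le
  rintro ⟨⟨α, β⟩, h0α, hαβ, hβ1⟩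
  show |(((Finset.Icc 1 m).filter (fun k => Int.fract (y k) ∈ Set.Ico α β)).card : ℝ)
      / ((Finset.Icc 1 m).card : ℝ) - (β - α)|
    ≤ 100 * ((y m - y 1) / m + K / Real.sqrt (y m - y 1))
  have hcardIcc : ((Finset.Icc 1 m).card : ℝ) = m := by
    rw [Nat.card_Icc]
    simp
  rw [hcardIcc]
  have hfle : (((Finset.Icc 1 m).filter
      (fun k => Int.fract (y k) ∈ Set.Ico α β)).card : ℝ) ≤ m := by
    have h1 : ((Finset.Icc 1 m).filter (fun k => Int.fract (y k) ∈ Set.Ico α β)).card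
        ≤ (Finset.Icc 1 m).card := Finset.card_filter_le _ _
    have h2 : ((Finset.Icc 1 m).card : ℝ) = m := hcardIcc
    calc (((Finset.Icc 1 m).filter (fun k => Int.fract (y k) ∈ Set.Ico α β)).card : ℝ)
        ≤ ((Finset.Icc 1 m).card : ℝ) := by exact_mod_cast h1
      _ = m := h2
  have hf0 : (0 : ℝ) ≤ (((Finset.Icc 1 m).filter
      (fun k => Int.fract (y k) ∈ Set.Ico α β)).card : ℝ) := Nat.cast_nonneg _
  by_cases htriv : (y m - y 1) / m < 1 / 4 ∧ K / Real.sqrt (y m - y 1) < 1 / 4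
  case neg =>
    have h1 : |(((Finset.Icc 1 m).filter
        (fun k => Int.fract (y k) ∈ Set.Ico α β)).card : ℝ) / m - (β - α)| ≤ 1 := by
      rw [abs_le]
      have hd1 : (((Finset.Icc 1 m).filter
          (fun k => Int.fract (y k) ∈ Set.Ico α β)).card : ℝ) / m ≤ 1 :=
        div_le_one_of_le₀ hfle hm0.le
      have hd0 : 0 ≤ (((Finset.Icc 1 m).filter
          (fun k => Int.fract (y k) ∈ Set.Ico α β)).card : ℝ) / m := by positivity
      constructor <;> [linarith; linarith]
    have h2 : 1 / 4 ≤ (y m - y 1) / m + K / Real.sqrt (y m - y 1) := by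
      push_neg at htriv
      rcases lt_or_ge ((y m - y 1) / m) (1 / 4) with hc | hc
      · have := htriv hc
        linarith
      · linarith
    linarith
  case pos =>
    obtain ⟨hA, hB⟩ := htriv
    have h4K : 4 * K < Real.sqrt (y m - y 1) := by
      rw [div_lt_iff₀ hsq0] at hB
      linarith
    have hsq4 : 4 < Real.sqrt (y m - y 1) := by nlinarith
    have ha16 : 16 < y m - y 1 := by nlinarith
    have ham : 4 * (y m - y 1) < m := by
      rw [div_lt_iff₀ hm0] at hA
      linarith
    set G := Real.sqrt (y m - y 1) / (K * m) with hGdef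
    have hG : 0 < G := div_pos hsq0 (by positivity)
    have hKmG : K * m * G = Real.sqrt (y m - y 1) := by
      rw [hGdef]
      field_simp
    have hsqlea : Real.sqrt (y m - y 1) ≤ y m - y 1 := by nlinarith
    -- the last gap is at least G
    have hgapm : G ≤ y (m - 1 + 1) - y (m - 1) := by
      have hsum_gaps : ∑ k ∈ Finset.Icc 1 (m - 1), (y (k + 1) - y k) = y m - y 1 := by
        have := sum_Icc_telescope y 1 (m - 1) (by omega)
        rwa [show m - 1 + 1 = m by omega] at this
      have hgapM_pos : 0 < y (m - 1 + 1) - y (m - 1) := hg (m - 1) (by omega) (by omega)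
      have hsum_le : y m - y 1 ≤ ((m : ℝ) - 1) * (y (m - 1 + 1) - y (m - 1)) := by
        rw [← hsum_gaps]
        calc ∑ k ∈ Finset.Icc 1 (m - 1), (y (k + 1) - y k)
            ≤ ∑ _k ∈ Finset.Icc 1 (m - 1), (y (m - 1 + 1) - y (m - 1)) := by
              apply Finset.sum_le_sum
              intro k hk
              have hk' := Finset.mem_Icc.mp hk
              exact gap_mono hd k (m - 1) hk'.1 hk'.2 (by omega)
          _ = ((m : ℝ) - 1) * (y (m - 1 + 1) - y (m - 1)) := by
              rw [Finset.sum_const, nsmul_eq_mul, Nat.card_Icc]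
              congr 1
              have h9 : m - 1 + 1 - 1 = m - 1 := by omega
              rw [h9]
              push_cast [show 1 ≤ m by omega]
              ring
      have h10 : K * m * G ≤ K * m * (y (m - 1 + 1) - y (m - 1)) := by
        rw [hKmG]
        calc Real.sqrt (y m - y 1) ≤ y m - y 1 := hsqlea
          _ ≤ ((m : ℝ) - 1) * (y (m - 1 + 1) - y (m - 1)) := hsum_le
          _ ≤ K * m * (y (m - 1 + 1) - y (m - 1)) := by nlinarith
      exact le_of_mul_le_mul_left h10 (by positivity)
    set E := (Finset.Icc 1 (m - 1)).filter (fun k => G ≤ y (k + 1) - y k) with hE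
    have hEne : E.Nonempty :=
      ⟨m - 1, Finset.mem_filter.mpr ⟨Finset.mem_Icc.mpr ⟨by omega, le_rfl⟩, hgapm⟩⟩
    set t₀ := E.min' hEne with ht₀def
    have ht₀mem := Finset.mem_filter.mp (E.min'_mem hEne)
    have ht1 : 1 ≤ t₀ := (Finset.mem_Icc.mp ht₀mem.1).1
    have ht2 : t₀ + 1 ≤ m := by
      have := (Finset.mem_Icc.mp ht₀mem.1).2
      omega
    have hGt : G ≤ y (t₀ + 1) - y t₀ := ht₀mem.2
    have hsmall : ∀ k : ℕ, 1 ≤ k → k < t₀ → y (k + 1) - y k < G := by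
      intro k h1 h2
      by_contra hcon
      push_neg at hcon
      have hkE : k ∈ E := Finset.mem_filter.mpr
        ⟨Finset.mem_Icc.mpr ⟨h1, by omega⟩, hcon⟩
      have := E.min'_le k hkE
      omega
    have hpig := pigeonhole_bound m y K G hm3 hK hG hg hdd t₀ ht1 ht2 hsmall (by linarith)
    -- simplify the pigeonhole conclusion
    have hmG : (m : ℝ) * G ≤ (y m - y 1) / 4 := by
      have h1 : (m : ℝ) * G = Real.sqrt (y m - y 1) / K := by
        rw [hGdef]
        field_simp
      rw [h1]
      have h2 : Real.sqrt (y m - y 1) / K ≤ Real.sqrt (y m - y 1) := by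
        rw [div_le_iff₀ hKpos]
        nlinarith
      nlinarith
    have hm2KG : (m : ℝ) ^ 2 * K * G = m * Real.sqrt (y m - y 1) := by
      rw [hGdef]
      field_simp
    have ht₀R : ((t₀ : ℝ) - 2) ≤ 2 * m / Real.sqrt (y m - y 1) := by
      rcases le_or_gt ((t₀ : ℝ) - 2) 0 with hc | hc
      · have : 0 < 2 * m / Real.sqrt (y m - y 1) := by positivity
        linarith
      · rw [le_div_iff₀ hsq0]
        have h1 : (y m - y 1) / 2 ≤ (y m - y 1) - m * G := by linarith
        have h2 : ((t₀ : ℝ) - 2) * ((y m - y 1) / 2)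
            ≤ ((t₀ : ℝ) - 2) * ((y m - y 1) - m * G) :=
          mul_le_mul_of_nonneg_left h1 hc.le
        have h3 : ((t₀ : ℝ) - 2) * (y m - y 1) ≤ 2 * (m * Real.sqrt (y m - y 1)) := by
          rw [← hm2KG]
          linarith
        nlinarith
    have hmain := main_count m y hm3 hg hd t₀ ht1 ht2 G hG hGt α β h0α hαβ hβ1
    have h3G : 3 / G = 3 * K * m / Real.sqrt (y m - y 1) := by
      rw [hGdef]
      rw [div_div_eq_mul_div]
      ring
    -- reduce to an inequality on the numerator
    have hsplit : (((Finset.Icc 1 m).filter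
        (fun k => Int.fract (y k) ∈ Set.Ico α β)).card : ℝ) / m - (β - α)
        = ((((Finset.Icc 1 m).filter
            (fun k => Int.fract (y k) ∈ Set.Ico α β)).card : ℝ) - m * (β - α)) / m := by
      field_simp
    rw [hsplit, abs_div, abs_of_pos hm0, div_le_iff₀ hm0]
    have hRHSm : 100 * ((y m - y 1) / m + K / Real.sqrt (y m - y 1)) * m
        = 100 * (y m - y 1) + 100 * (K * m / Real.sqrt (y m - y 1)) := by
      field_simp
    rw [hRHSm]
    -- final chain
    have huv : (m : ℝ) / Real.sqrt (y m - y 1) ≤ K * m / Real.sqrt (y m - y 1) := by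
      have h9 : (K * m / Real.sqrt (y m - y 1)) - (m : ℝ) / Real.sqrt (y m - y 1)
          = ((K - 1) * m) / Real.sqrt (y m - y 1) := by ring
      have h10 : 0 ≤ ((K - 1) * m) / Real.sqrt (y m - y 1) :=
        div_nonneg (by nlinarith) hsq0.le
      linarith
    have hKmpos : 0 < K * m / Real.sqrt (y m - y 1) := by positivity
    have h2m : 2 * m / Real.sqrt (y m - y 1) = 2 * ((m:ℝ) / Real.sqrt (y m - y 1)) := by ring
    have h3Km : 3 * K * m / Real.sqrt (y m - y 1)
        = 3 * (K * m / Real.sqrt (y m - y 1)) := by ring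
    calc |(((Finset.Icc 1 m).filter
        (fun k => Int.fract (y k) ∈ Set.Ico α β)).card : ℝ) - m * (β - α)|
        ≤ ((t₀ : ℝ) - 1) + 3 / G + 2 * (y m - y 1) + 6 := hmain
      _ ≤ 100 * (y m - y 1) + 100 * (K * m / Real.sqrt (y m - y 1)) := by
          rw [h3G]
          rw [h2m] at ht₀R
          rw [h3Km]
          linarith [huv, hKmpos, ha16, ht₀R]
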